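/- Every Hirzebruch–Jung continued fraction string for p²/(pq−1) with p > q ≥ 1 coprime (all entries ≥ 2) is obtainable from the string [4] by finitely many applications of the two operations [c₁,...,c_k] ↦ [c₁+1, c₂, ..., c_k, 2] and [c₁,...,c_k] ↦ [2, c₁, ..., c_{k−1}, c_k+1]; conversely every string so obtained is the expansion of p²/(pq−1) for some coprime p > q ≥ 1. -/

import Mathlib

/-- Hirzebruch–Jung continued fraction `[a₁,…,a_k] = a₁ - 1/(a₂ - 1/(⋯ - 1/a_k))`.
Note `1/0 = 0` in `ℚ`, so `hj [a] = a`. -/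
def hj : List ℚ → ℚ
  | [] => 0
  | a :: l => a - 1 / hj l

/-- HJ continued fraction of a list of naturals. -/
def hjN (l : List ℕ) : ℚ := hj (l.map (fun x => (x : ℚ)))

/-- Strings obtainable from [4] via
[c₁,…,c_k] ↦ [c₁+1, c₂, …, c_k, 2] and [c₁,…,c_k] ↦ [2, c₁, …, c_{k−1}, c_k+1]. -/
inductive Gen1 : List ℕ → Prop
  | base : Gen1 [4]
  | left {c : ℕ} {l : List ℕ} : Gen1 (c :: l) → Gen1 ((c + 1) :: (l ++ [2]))
  | right {l : List ℕ} {c : ℕ} : Gen1 (l ++ [c]) → Gen1 (2 :: (l ++ [c + 1]))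


/-- continuant matrix entries of the HJ string: product of [[a,-1],[1,0]]. -/
def Qd : List ℕ → ℤ × ℤ × ℤ × ℤ
  | [] => (1, 0, 0, 1)
  | a :: l => ((a : ℤ) * (Qd l).1 - (Qd l).2.2.1, (a : ℤ) * (Qd l).2.1 - (Qd l).2.2.2,
      (Qd l).1, (Qd l).2.1)

def QA (l : List ℕ) : ℤ := (Qd l).1
def QB (l : List ℕ) : ℤ := (Qd l).2.1
def QC (l : List ℕ) : ℤ := (Qd l).2.2.1
def QD (l : List ℕ) : ℤ := (Qd l).2.2.2

@[simp] lemma QA_nil : QA [] = 1 := rfl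
@[simp] lemma QB_nil : QB [] = 0 := rfl
@[simp] lemma QC_nil : QC [] = 0 := rfl
@[simp] lemma QD_nil : QD [] = 1 := rfl
@[simp] lemma QA_cons (a : ℕ) (l : List ℕ) : QA (a :: l) = a * QA l - QC l := rfl
@[simp] lemma QB_cons (a : ℕ) (l : List ℕ) : QB (a :: l) = a * QB l - QD l := rfl
@[simp] lemma QC_cons (a : ℕ) (l : List ℕ) : QC (a :: l) = QA l := rfl
@[simp] lemma QD_cons (a : ℕ) (l : List ℕ) : QD (a :: l) = QB l := rfl

lemma Qd_eta (l : List ℕ) : Qd l = (QA l, QB l, QC l, QD l) := rfl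


lemma Qd_append' (l : List ℕ) (a : ℕ) :
    QA (l ++ [a]) = a * QA l + QB l ∧ QB (l ++ [a]) = -QA l ∧
    QC (l ++ [a]) = a * QC l + QD l ∧ QD (l ++ [a]) = -QC l := by
  induction l with
  | nil => simp
  | cons b t ih =>
      obtain ⟨h1, h2, h3, h4⟩ := ih
      refine ⟨?_, ?_, ?_, ?_⟩ <;> simp [h1, h2, h3, h4] <;> ring

lemma QA_append (l : List ℕ) (a : ℕ) : QA (l ++ [a]) = a * QA l + QB l := (Qd_append' l a).1
lemma QB_append (l : List ℕ) (a : ℕ) : QB (l ++ [a]) = -QA l := (Qd_append' l a).2.1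
lemma QC_append (l : List ℕ) (a : ℕ) : QC (l ++ [a]) = a * QC l + QD l := (Qd_append' l a).2.2.1
lemma QD_append (l : List ℕ) (a : ℕ) : QD (l ++ [a]) = -QC l := (Qd_append' l a).2.2.2

lemma Q_det (l : List ℕ) : QA l * QD l - QB l * QC l = 1 := by
  induction l with
  | nil => simp
  | cons a t ih => simp; ring_nf; linarith [ih]

lemma Q_inv {l : List ℕ} (h2 : ∀ x ∈ l, 2 ≤ x) (hne : l ≠ []) :
    QC l + 1 ≤ QA l ∧ 1 ≤ QC l ∧ QB l ≤ QD l - 1 ∧ QD l ≤ 0 ∧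
      1 ≤ QC l + QD l ∧ QC l + QD l ≤ QA l + QB l := by
  induction l with
  | nil => exact absurd rfl hne
  | cons a t ih =>
      have ha : (2 : ℤ) ≤ (a : ℤ) := by exact_mod_cast h2 a (by simp)
      rcases eq_or_ne t [] with rfl | htne
      · have : 2 ≤ a := h2 a (by simp)
        refine ⟨?_, ?_, ?_, ?_, ?_, ?_⟩ <;> simp <;> omega
      · obtain ⟨i1, i2, i3, i4, i5, i6⟩ := ih (fun x hx => h2 x (by simp [hx])) htne
        refine ⟨?_, ?_, ?_, ?_, ?_, ?_⟩ <;> simp <;> nlinarith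

lemma QA_pos {l : List ℕ} (h2 : ∀ x ∈ l, 2 ≤ x) : 1 ≤ QA l := by
  rcases eq_or_ne l [] with rfl | h
  · simp
  · linarith [(Q_inv h2 h).1, (Q_inv h2 h).2.1]

lemma hjN_eq_div {l : List ℕ} (h2 : ∀ x ∈ l, 2 ≤ x) :
    hjN l = (QA l : ℚ) / (QC l : ℚ) := by
  induction l with
  | nil => simp [hjN, hj]
  | cons a t ih =>
      have ht2 : ∀ x ∈ t, 2 ≤ x := fun x hx => h2 x (by simp [hx])
      have hA : (1 : ℤ) ≤ QA t := QA_pos ht2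
      have hA' : (QA t : ℚ) ≠ 0 := by positivity
      have : hjN (a :: t) = (a : ℚ) - 1 / hjN t := by
        rfl
      rw [this, ih ht2, one_div_div]
      rw [QA_cons, QC_cons]
      push_cast
      field_simp

lemma Qd_reverse (l : List ℕ) :
    QA l.reverse = QA l ∧ QB l.reverse = -QC l ∧ QC l.reverse = -QB l ∧
      QD l.reverse = QD l := by
  induction l with
  | nil => simp
  | cons a t ih =>
      obtain ⟨h1, h2, h3, h4⟩ := ih
      simp only [List.reverse_cons, QA_append, QB_append, QC_append, QD_append,
        QA_cons, QB_cons, QC_cons, QD_cons, h1, h2, h3, h4]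
      refine ⟨by ring, trivial, by ring, by ring⟩

lemma gen1_entries {l : List ℕ} (h : Gen1 l) : ∀ x ∈ l, 2 ≤ x := by
  induction h with
  | base => intro x hx; simp at hx; omega
  | @left c t h ih =>
      intro x hx
      simp at hx
      rcases hx with rfl | hx | rfl
      · have := ih c (by simp); omega
      · exact ih _ (by simp [hx])
      · omega
  | @right t c h ih =>
      intro x hx
      simp at hx
      rcases hx with rfl | hx | rfl
      · omega
      · exact ih _ (by simp [hx])
      · have := ih c (by simp); omega

lemma gen1_quad {l : List ℕ} (h : Gen1 l) :
    ∃ p q : ℕ, 1 ≤ q ∧ q < p ∧ Nat.Coprime p q ∧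
      QA l = (p : ℤ) ^ 2 ∧ QB l = 1 + p * q - (p : ℤ) ^ 2 ∧
      QC l = (p : ℤ) * q - 1 ∧ QD l = 1 + (q : ℤ) ^ 2 - p * q := by
  induction h with
  | base =>
      refine ⟨2, 1, le_refl 1, by norm_num, by norm_num, ?_, ?_, ?_, ?_⟩ <;>
        simp [QA, QB, QC, QD, Qd] <;> norm_num
  | @left c t h ih =>
      obtain ⟨p, q, hq, hqp, hcop, e1, e2, e3, e4⟩ := ih
      have hAt : QA t = (p : ℤ) * q - 1 := by rw [← QC_cons c]; exact e3
      have hBt : QB t = 1 + (q : ℤ) ^ 2 - p * q := by rw [← QD_cons c]; exact e4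
      have hCt : QC t = c * ((p : ℤ) * q - 1) - (p : ℤ) ^ 2 := by
        have := e1; rw [QA_cons, hAt] at this; linarith
      have hDt : QD t = c * (1 + (q : ℤ) ^ 2 - p * q) - (1 + (p : ℤ) * q - (p : ℤ) ^ 2) := by
        have := e2; rw [QB_cons, hBt] at this; linarith
      refine ⟨p + q, q, hq, by omega, by
        rw [Nat.coprime_add_self_left]; exact hcop, ?_, ?_, ?_, ?_⟩ <;>
      · simp only [QA_cons, QB_cons, QC_cons, QD_cons, QA_append, QB_append, QC_append,
          QD_append, hAt, hBt, hCt, hDt]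
        push_cast
        ring
  | @right t c h ih =>
      obtain ⟨p, q, hq, hqp, hcop, e1, e2, e3, e4⟩ := ih
      obtain ⟨d, hd⟩ : ∃ d, p = q + d := ⟨p - q, by omega⟩
      have hd1 : 1 ≤ d := by omega
      subst hd
      have hAt : QA t = ((q:ℤ) + d) ^ 2 - (q + d) * q - 1 := by
        have := e2; rw [QB_append] at this; push_cast at this ⊢; linarith
      have hCt : QC t = ((q:ℤ) + d) * q - (q:ℤ) ^ 2 - 1 := by
        have := e4; rw [QD_append] at this; push_cast at this ⊢; linarith
      have hBt : QB t = ((q:ℤ) + d) ^ 2 - c * (((q:ℤ) + d) ^ 2 - (q + d) * q - 1) := by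
        have := e1; rw [QA_append, hAt] at this; push_cast at this ⊢; linarith
      have hDt : QD t = ((q:ℤ) + d) * q - 1 - c * (((q:ℤ) + d) * q - (q:ℤ) ^ 2 - 1) := by
        have := e3; rw [QC_append, hCt] at this; push_cast at this ⊢; linarith
      refine ⟨q + d + d, q + d, by omega, by omega, ?_, ?_, ?_, ?_, ?_⟩
      · have h1 : Nat.Coprime d q := by
          have hqd : q + d = d + q := by omega
          rw [hqd] at hcop
          exact Nat.coprime_add_self_left.mp hcop
        have h2 : q + d + d = d + (q + d) := by omega
        rw [h2]
        exact Nat.coprime_add_self_left.mpr (Nat.coprime_add_self_right.mpr h1)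
      all_goals
        simp only [QA_cons, QB_cons, QC_cons, QD_cons, QA_append, QB_append, QC_append,
          QD_append, hAt, hBt, hCt, hDt]
        push_cast
        ring

lemma head_shape {p q : ℕ} {l : List ℕ} (h2 : ∀ x ∈ l, 2 ≤ x)
    (hq : 1 ≤ q) (hqp : q < p) (hpq3 : 3 ≤ p * q)
    (eA : QA l = (p : ℤ) ^ 2) (eC : QC l = (p : ℤ) * q - 1) :
    ∃ a m, l = a :: m ∧ m ≠ [] ∧ (p < 2 * q → a = 2) ∧ (2 * q < p → 3 ≤ a) := by
  have hp2 : 2 ≤ p := by omega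
  have hpq3' : (3 : ℤ) ≤ (p : ℤ) * q := by exact_mod_cast hpq3
  rcases l with _ | ⟨a, m⟩
  · exfalso
    have : (1 : ℤ) = (p : ℤ) ^ 2 := eA
    have : (2 : ℤ) ≤ p := by exact_mod_cast hp2
    nlinarith
  · have ha2 : 2 ≤ a := h2 a (by simp)
    have hm2 : ∀ x ∈ m, 2 ≤ x := fun x hx => h2 x (by simp [hx])
    have hAm : QA m = (p : ℤ) * q - 1 := by rw [← QC_cons a]; exact eC
    have hmne : m ≠ [] := by
      rintro rfl
      rw [QA_nil] at hAm
      omega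
    obtain ⟨i1, i2, _, _, _, _⟩ := Q_inv hm2 hmne
    have hCm : QC m = a * ((p : ℤ) * q - 1) - (p : ℤ) ^ 2 := by
      have := eA; rw [QA_cons, hAm] at this; linarith
    refine ⟨a, m, rfl, hmne, ?_, ?_⟩
    · intro hlt
      by_contra hne
      have ha3 : 3 ≤ a := by omega
      have ha3' : (3 : ℤ) ≤ (a : ℤ) := by exact_mod_cast ha3
      -- QC m ≤ QA m - 1 :  a(pq-1) - p² ≤ pq - 2
      have hub : (a : ℤ) * ((p : ℤ) * q - 1) - (p : ℤ) ^ 2 ≤ (p : ℤ) * q - 2 := by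
        rw [← hCm]; linarith [hAm, i1]
      have h3a : (3 : ℤ) * ((p : ℤ) * q - 1) ≤ (a : ℤ) * ((p : ℤ) * q - 1) := by
        nlinarith
      -- so 2pq ≤ p² + 1
      have h2pq : 2 * ((p : ℤ) * q) ≤ (p : ℤ) ^ 2 + 1 := by nlinarith
      -- but p < 2q gives p² + p ≤ 2pq
      have hplt : (p : ℤ) + 1 ≤ 2 * q := by exact_mod_cast hlt
      have : (p : ℤ) ^ 2 + p ≤ 2 * ((p : ℤ) * q) := by nlinarith
      have hp2' : (2 : ℤ) ≤ p := by exact_mod_cast hp2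
      linarith
    · intro hgt
      by_contra hne
      have ha : a = 2 := by omega
      subst ha
      have hlb : (1 : ℤ) ≤ 2 * ((p : ℤ) * q - 1) - (p : ℤ) ^ 2 := by
        push_cast at hCm; rw [← hCm]; exact i2
      have hgt' : (2 : ℤ) * q + 1 ≤ p := by exact_mod_cast hgt
      have hp0 : (0 : ℤ) < p := by positivity
      nlinarith

lemma coprime_int_trans {p q q0 : ℕ} (hcop : Nat.Coprime p q) (h : (p : ℤ) + q0 = 2 * q) :
    Nat.Coprime q q0 := by
  rw [Nat.isCoprime_iff_coprime.symm] at hcop ⊢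
  obtain ⟨u, v, huv⟩ := hcop
  exact ⟨2 * u + v, -u, by linear_combination huv - u * h⟩

lemma conv : ∀ p q : ℕ, ∀ l : List ℕ, (∀ x ∈ l, 2 ≤ x) → 1 ≤ q → q < p → Nat.Coprime p q →
    QA l = (p : ℤ) ^ 2 → QB l = 1 + p * q - (p : ℤ) ^ 2 →
    QC l = (p : ℤ) * q - 1 → QD l = 1 + (q : ℤ) ^ 2 - p * q → Gen1 l := by
  intro p
  induction p using Nat.strong_induction_on with
  | _ p IH =>
  intro q l h2 hq hqp hcop eA eB eC eD
  rcases Nat.lt_trichotomy p (2 * q) with hlt | heq | hgt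
  -- Case p < 2q
  · have hq2 : 2 ≤ q := by
      by_contra h
      interval_cases q <;> omega
    have hpq3 : 3 ≤ p * q := by nlinarith
    obtain ⟨a, m0, hl, hm0ne, hA2, _⟩ := head_shape h2 hq hqp hpq3 eA eC
    have ha2 : a = 2 := hA2 hlt
    subst ha2 hl
    -- reverse analysis: parameters (p, d) with d = p - q
    obtain ⟨d, hd⟩ : ∃ d, p = q + d := ⟨p - q, by omega⟩
    have hd1 : 1 ≤ d := by omega
    have hrev2 : ∀ x ∈ (2 :: m0).reverse, 2 ≤ x := fun x hx => h2 x (by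
      rw [List.mem_reverse] at hx; exact hx)
    obtain ⟨rA, rB, rC, rD⟩ := Qd_reverse (2 :: m0)
    have erA : QA (2 :: m0).reverse = (p : ℤ) ^ 2 := by rw [rA]; exact eA
    have erC : QC (2 :: m0).reverse = (p : ℤ) * d - 1 := by
      rw [rC, eB]; subst hd; push_cast; ring
    have hdp : d < p := by omega
    have hpd3 : 3 ≤ p * d := by nlinarith
    obtain ⟨e, m1, hrl, _, hE2, hE3⟩ := head_shape hrev2 hd1 hdp hpd3 erA erC
    have he3 : 3 ≤ e := hE3 (by omega)
    -- decompose m0 = m ++ [e]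
    obtain ⟨m, e', hme⟩ : ∃ m e', m0 = m ++ [e'] := by
      rcases List.eq_nil_or_concat' m0 with h | ⟨L, b, h⟩
      · exact absurd h hm0ne
      · exact ⟨L, b, h⟩
    have hee : e' = e := by
      subst hme
      have : (2 :: (m ++ [e'])).reverse = e' :: (m.reverse ++ [2]) := by simp
      rw [hrl] at this
      exact (List.cons.injEq _ _ _ _ ▸ this).1.symm
    subst hme
    have he3' : 3 ≤ e' := by omega
    obtain ⟨c, hc⟩ : ∃ c, e' = c + 1 := ⟨e' - 1, by omega⟩
    subst hc
    -- set up equations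
    obtain ⟨q0, hq0⟩ : ∃ q0, p + q0 = 2 * q := ⟨2 * q - p, by omega⟩
    have hq01 : 1 ≤ q0 := by omega
    have hq0q : q0 < q := by omega
    have hpz : (p : ℤ) = 2 * q - q0 := by
      have : (p : ℤ) + q0 = 2 * q := by exact_mod_cast hq0
      linarith
    have hcop' : Nat.Coprime q q0 := coprime_int_trans hcop (by exact_mod_cast hq0)
    -- component equations (w = QA m, x = QB m, y = QC m, z = QD m)
    have hw : QA m = (p : ℤ) * q - (q : ℤ) ^ 2 - 1 := by
      have := eD; rw [QD_cons, QB_append] at this; linarith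
    have hy : QC m = 3 * ((p : ℤ) * q) - (p : ℤ) ^ 2 - 2 * (q : ℤ) ^ 2 - 1 := by
      have := eB; rw [QB_cons, QB_append, QD_append, hw] at this; push_cast at this; linarith
    have hx : QB m = (p : ℤ) * q - 1 - ((c : ℤ) + 1) * ((p : ℤ) * q - (q : ℤ) ^ 2 - 1) := by
      have := eC; rw [QC_cons, QA_append, hw] at this; push_cast at this ⊢; linarith
    have hz : QD m = 2 * ((p : ℤ) * q - 1) - (p : ℤ) ^ 2
        - ((c : ℤ) + 1) * (3 * ((p : ℤ) * q) - (p : ℤ) ^ 2 - 2 * (q : ℤ) ^ 2 - 1) := by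
      have := eA
      rw [QA_cons, QA_append, QC_append, hw, hx, hy] at this
      push_cast at this ⊢
      linear_combination -this
    refine Gen1.right (IH q hqp q0 (m ++ [c]) ?_ hq01 hq0q hcop' ?_ ?_ ?_ ?_)
    · intro x hx'
      rcases List.mem_append.mp hx' with h | h
      · exact h2 x (by simp [h])
      · simp at h; omega
    · rw [QA_append, hw, hx]; push_cast; ring
    · rw [QB_append, hw, hpz]; push_cast; ring
    · rw [QC_append, hy, hz, hpz]; push_cast; ring
    · rw [QD_append, hy, hpz]; push_cast; ring
  -- Case p = 2q
  · have hq1 : q = 1 := (Nat.Coprime.eq_one_of_dvd hcop.symm ⟨2, by omega⟩)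
    have hp2 : p = 2 := by omega
    subst hq1 hp2
    norm_num at eA eC
    rcases l with _ | ⟨a, m⟩
    · simp at eA
    · have hAm : QA m = 1 := by rw [← QC_cons a]; exact eC
      have hm : m = [] := by
        by_contra hne
        have := (Q_inv (fun x hx => h2 x (by simp [hx])) hne).1
        have := (Q_inv (fun x hx => h2 x (by simp [hx])) hne).2.1
        omega
      subst hm
      have : (a : ℤ) = 4 := by
        have := eA; rw [QA_cons] at this; simpa using this
      have ha : a = 4 := by exact_mod_cast this
      subst ha
      exact Gen1.base
  -- Case 2q < p
  · have hpq3 : 3 ≤ p * q := by nlinarith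
    obtain ⟨a, m0, hl, hm0ne, _, hA3⟩ := head_shape h2 hq hqp hpq3 eA eC
    have ha3 : 3 ≤ a := hA3 hgt
    subst hl
    obtain ⟨d, hd⟩ : ∃ d, p = q + d := ⟨p - q, by omega⟩
    have hd1 : 1 ≤ d := by omega
    have hrev2 : ∀ x ∈ (a :: m0).reverse, 2 ≤ x := fun x hx => h2 x (by
      rw [List.mem_reverse] at hx; exact hx)
    obtain ⟨rA, rB, rC, rD⟩ := Qd_reverse (a :: m0)
    have erA : QA (a :: m0).reverse = (p : ℤ) ^ 2 := by rw [rA]; exact eA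
    have erC : QC (a :: m0).reverse = (p : ℤ) * d - 1 := by
      rw [rC, eB]; subst hd; push_cast; ring
    have hdp : d < p := by omega
    have hpd3 : 3 ≤ p * d := by nlinarith
    obtain ⟨e, m1, hrl, _, hE2, _⟩ := head_shape hrev2 hd1 hdp hpd3 erA erC
    have he2 : e = 2 := hE2 (by omega)
    subst he2
    obtain ⟨m, e', hme⟩ : ∃ m e', m0 = m ++ [e'] := by
      rcases List.eq_nil_or_concat' m0 with h | ⟨L, b, h⟩
      · exact absurd h hm0ne
      · exact ⟨L, b, h⟩
    have hee : e' = 2 := by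
      subst hme
      have : (a :: (m ++ [e'])).reverse = e' :: (m.reverse ++ [a]) := by simp
      rw [hrl] at this
      exact (List.cons.injEq _ _ _ _ ▸ this).1.symm
    subst hee hme
    obtain ⟨c, hc⟩ : ∃ c, a = c + 1 := ⟨a - 1, by omega⟩
    subst hc
    have hc2 : 2 ≤ c := by omega
    have hqd : q < d := by omega
    have hdz : (p : ℤ) = (q : ℤ) + d := by exact_mod_cast hd
    have hcop' : Nat.Coprime d q := by
      have h' : Nat.Coprime (d + q) q := by
        rw [show d + q = q + d by omega, ← hd]; exact hcop
      exact Nat.coprime_add_self_left.mp h'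
    -- equations
    have hw : QA m = (p : ℤ) * q - (q : ℤ) ^ 2 - 1 := by
      have := eD; rw [QD_cons, QB_append] at this; linarith
    have hx : QB m = 2 * (q : ℤ) ^ 2 - (p : ℤ) * q + 1 := by
      have := eC; rw [QC_cons, QA_append, hw] at this; push_cast at this; linarith
    have hy : QC m = ((c : ℤ) + 1) * ((p : ℤ) * q - (q : ℤ) ^ 2 - 1)
        + 1 + (p : ℤ) * q - (p : ℤ) ^ 2 := by
      have := eB; rw [QB_cons, QB_append, QD_append, hw] at this; push_cast at this ⊢
      linear_combination this
    have hz : QD m = ((c : ℤ) + 1) * ((p : ℤ) * q - 1) - (p : ℤ) ^ 2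
        - 2 * (((c : ℤ) + 1) * ((p : ℤ) * q - (q : ℤ) ^ 2 - 1)
          + 1 + (p : ℤ) * q - (p : ℤ) ^ 2) := by
      have := eA
      rw [QA_cons, QA_append, QC_append, hw, hx, hy] at this
      push_cast at this ⊢
      linear_combination -this
    refine Gen1.left (IH d (by omega) q (c :: m) ?_ hq hqd hcop' ?_ ?_ ?_ ?_)
    · intro x hx'
      rcases List.mem_cons.mp hx' with rfl | h
      · omega
      · exact h2 x (by simp [h])
    · rw [QA_cons, hw, hy, hdz]; push_cast; ring
    · rw [QB_cons, hx, hz, hdz]; push_cast; ring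
    · rw [QC_cons, hw, hdz]; push_cast; ring
    · rw [QD_cons, hx, hdz]; push_cast; ring

theorem stmt17 (l : List ℕ) :
    Gen1 l ↔
      ((∀ x ∈ l, 2 ≤ x) ∧
        ∃ p q : ℕ, 1 ≤ q ∧ q < p ∧ Nat.Coprime p q ∧
          hjN l = ((p ^ 2 : ℕ) : ℚ) / ((p * q - 1 : ℕ) : ℚ)) := by
  constructor
  · intro h
    have h2 := gen1_entries h
    obtain ⟨p, q, hq, hqp, hcop, eA, eB, eC, eD⟩ := gen1_quad h
    refine ⟨h2, p, q, hq, hqp, hcop, ?_⟩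
    have hpq1 : 1 ≤ p * q := Nat.mul_pos (by omega) (by omega)
    rw [hjN_eq_div h2, eA, eC, Nat.cast_sub hpq1]
    push_cast
    ring
  · rintro ⟨h2, p, q, hq, hqp, hcop, hval⟩
    have hp2 : 2 ≤ p := by omega
    have hpq1 : 1 ≤ p * q := Nat.mul_pos (by omega) (by omega)
    have hpqQ : ((p * q - 1 : ℕ) : ℚ) = (p : ℚ) * q - 1 := by
      rw [Nat.cast_sub hpq1]; push_cast; ring
    have hpqpos : (0 : ℚ) < (p : ℚ) * q - 1 := by
      have : (2 : ℚ) ≤ (p : ℚ) := by exact_mod_cast hp2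
      have : (1 : ℚ) ≤ (q : ℚ) := by exact_mod_cast hq
      nlinarith
    have hne : l ≠ [] := by
      rintro rfl
      have h0 : hjN ([] : List ℕ) = 0 := by simp [hjN, hj]
      rw [h0, hpqQ] at hval
      have hppos : (0 : ℚ) < ((p ^ 2 : ℕ) : ℚ) := by
        have : (0:ℕ) < p ^ 2 := by positivity
        exact_mod_cast this
      have := div_pos hppos hpqpos
      rw [← hval] at this
      exact lt_irrefl 0 this
    obtain ⟨i1, i2, i3, i4, i5, i6⟩ := Q_inv h2 hne
    have hCQ : (0 : ℚ) < (QC l : ℚ) := by exact_mod_cast i2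
    have hval' : (QA l : ℚ) / (QC l : ℚ) = (p : ℚ) ^ 2 / ((p : ℚ) * q - 1) := by
      rw [← hjN_eq_div h2, hval, hpqQ]; push_cast; ring_nf
    have hcross : QA l * ((p : ℤ) * q - 1) = (p : ℤ) ^ 2 * QC l := by
      have := (div_eq_div_iff (ne_of_gt hCQ) (ne_of_gt hpqpos)).mp hval'
      exact_mod_cast this
    have copAC : IsCoprime (QA l) (QC l) :=
      ⟨QD l, -QB l, by linarith [Q_det l]⟩
    have copP : IsCoprime ((p : ℤ) ^ 2) ((p : ℤ) * q - 1) := by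
      have : IsCoprime ((p : ℤ)) ((p : ℤ) * q - 1) := ⟨(q : ℤ), -1, by ring⟩
      exact this.pow_left
    have hd1 : QA l ∣ (p : ℤ) ^ 2 :=
      copAC.dvd_of_dvd_mul_right ⟨(p : ℤ) * q - 1, by linarith⟩
    have hd2 : (p : ℤ) ^ 2 ∣ QA l :=
      copP.dvd_of_dvd_mul_right ⟨QC l, by linarith⟩
    have eA : QA l = (p : ℤ) ^ 2 :=
      Int.dvd_antisymm (by linarith) (by positivity) hd1 hd2
    have eC : QC l = (p : ℤ) * q - 1 := by
      have hp0 : ((p : ℤ) ^ 2) ≠ 0 := by positivity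
      rw [eA] at hcross
      exact (mul_left_cancel₀ hp0 hcross).symm
    have hdet : (p : ℤ) ^ 2 * QD l - QB l * ((p : ℤ) * q - 1) = 1 := by
      have := Q_det l; rw [eA, eC] at this; linarith
    have hdvd : (p : ℤ) ^ 2 ∣ (QB l - (1 + p * q - (p : ℤ) ^ 2)) * ((p : ℤ) * q - 1) :=
      ⟨QD l - (1 + (q : ℤ) ^ 2 - p * q), by linear_combination -hdet⟩
    obtain ⟨k, hk⟩ := copP.dvd_of_dvd_mul_right hdvd
    have eB : QB l = 1 + (p : ℤ) * q - (p : ℤ) ^ 2 + (p : ℤ) ^ 2 * k := by linarith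
    have eD : QD l = 1 + (q : ℤ) ^ 2 - (p : ℤ) * q + ((p : ℤ) * q - 1) * k := by
      have hp0 : ((p : ℤ) ^ 2) ≠ 0 := by positivity
      have h' : (p : ℤ) ^ 2 * (QD l - (1 + (q : ℤ) ^ 2 - p * q))
          = (p : ℤ) ^ 2 * (((p : ℤ) * q - 1) * k) := by linear_combination hdet + ((p:ℤ)*q-1) * hk
      have := mul_left_cancel₀ hp0 h'
      linarith
    have hqz : (1 : ℤ) ≤ (q : ℤ) := by exact_mod_cast hq
    have hpz : (q : ℤ) + 1 ≤ (p : ℤ) := by exact_mod_cast hqp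
    have hpqz : (1 : ℤ) ≤ (p : ℤ) * q - 1 := by nlinarith
    have hk0 : k = 0 := by
      rcases lt_trichotomy k 0 with hneg | h0 | hpos
      · -- QA + QB < 1 ≤ QC + QD ≤ QA + QB
        exfalso
        have hkle : k ≤ -1 := by omega
        have : (p : ℤ) ^ 2 * k ≤ (p : ℤ) ^ 2 * (-1) := by
          apply mul_le_mul_of_nonneg_left _ (by positivity)
          exact hkle
        have hAB : QA l + QB l ≤ 1 + (p : ℤ) * q - (p : ℤ) ^ 2 := by
          rw [eA, eB]; linarith
        nlinarith
      · exact h0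
      · exfalso
        have hkge : 1 ≤ k := by omega
        have : ((p : ℤ) * q - 1) * 1 ≤ ((p : ℤ) * q - 1) * k := by
          apply mul_le_mul_of_nonneg_left hkge (by linarith)
        have : 1 ≤ QD l := by rw [eD]; nlinarith
        linarith
    subst hk0
    simp only [mul_zero, add_zero] at eB eD
    exact conv p q l h2 hq hqp hcop eA eB eC eD
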